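/- arXiv:2006.14935 — 2 statements merged into one kernel-verified Lean document; each statement's English description precedes it below -/
import Mathlib

section
/- Let z₁, z₂, m, w ∈ ℍ and t > 0. Assume m is the midpoint of z₁ and z₂, i.e. d(z₁,m) = d(m,z₂) = d(z₁,z₂)/2, and assume d(w,z₁) ≤ t and d(w,z₂) ≤ t. Then cosh(d(w,m)) · cosh(d(z₁,z₂)/2) ≤ cosh t. -/
private lemma hyp_median_identity (a b c d p q u v s : ℝ)
    (h1 : (a - p) ^ 2 + b ^ 2 + q ^ 2 = 2 * b * q * s)
    (h2 : (c - p) ^ 2 + d ^ 2 + q ^ 2 = 2 * d * q * s)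
    (h3 : (a - c) ^ 2 + b ^ 2 + d ^ 2 = 2 * b * d * (2 * s ^ 2 - 1))
    (hq0 : 0 < q) :
    d * q * ((u - a) ^ 2 + v ^ 2 + b ^ 2) + b * q * ((u - c) ^ 2 + v ^ 2 + d ^ 2)
      = 2 * s * b * d * ((u - p) ^ 2 + v ^ 2 + q ^ 2) := by
  have key : ((a - p) * (c - p) - b * d + q ^ 2) ^ 2 + ((a - p) * d + b * (c - p)) ^ 2 = 0 := by
    linear_combination ((c - p) ^ 2 + d ^ 2 + q ^ 2) * h1 + (2 * b * q * s) * h2 - q ^ 2 * h3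
  have hA : (a - p) * d + b * (c - p) = 0 := by
    nlinarith [sq_nonneg ((a - p) * (c - p) - b * d + q ^ 2), sq_nonneg ((a - p) * d + b * (c - p))]
  have hB : (a - p) * (c - p) - b * d + q ^ 2 = 0 := by
    nlinarith [sq_nonneg ((a - p) * (c - p) - b * d + q ^ 2), sq_nonneg ((a - p) * d + b * (c - p))]
  have hStar2 : ((b + d) * q - 2 * b * d * s) * q = 0 := by
    linear_combination d * h1 + b * hB - (a - p) * hA
  have hStar : (b + d) * q = 2 * b * d * s := by
    have := mul_eq_zero.mp hStar2
    rcases this with h | h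
    · linarith
    · exact absurd h (ne_of_gt hq0)
  linear_combination ((u - p) ^ 2 + v ^ 2 + q ^ 2) * hStar + q * (a + c - 2 * u) * hA
    - q * (b + d) * hB

/-- **Hyperbolic Pythagoras estimate.** If `m` is the midpoint of `z₁` and `z₂` in the
hyperbolic upper half-plane and `w` lies within hyperbolic distance `t` of both `z₁` and
`z₂`, then `cosh (d(w, m)) * cosh (d(z₁, z₂) / 2) ≤ cosh t`. -/
theorem hyperbolic_pythagoras_estimate (z₁ z₂ m w : UpperHalfPlane) (t : ℝ) (ht : 0 < t)
    (hm₁ : dist z₁ m = dist z₁ z₂ / 2) (hm₂ : dist m z₂ = dist z₁ z₂ / 2)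
    (hw₁ : dist w z₁ ≤ t) (hw₂ : dist w z₂ ≤ t) :
    Real.cosh (dist w m) * Real.cosh (dist z₁ z₂ / 2) ≤ Real.cosh t := by
  have hb0 : 0 < z₁.im := z₁.im_pos
  have hd0 : 0 < z₂.im := z₂.im_pos
  have hq0 : 0 < m.im := m.im_pos
  have hv0 : 0 < w.im := w.im_pos
  set s := Real.cosh (dist z₁ m) with hs
  have hds : Real.cosh (dist z₁ z₂ / 2) = s := by rw [hs, hm₁]
  have hdm : Real.cosh (dist m z₂) = s := by rw [hm₂, ← hm₁]
  have hdfull : Real.cosh (dist z₁ z₂) = 2 * s ^ 2 - 1 := by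
    have h2 : dist z₁ z₂ = 2 * (dist z₁ z₂ / 2) := by ring
    rw [h2, Real.cosh_two_mul, Real.sinh_sq, hds]; ring
  have h1 : (z₁.re - m.re) ^ 2 + z₁.im ^ 2 + m.im ^ 2 = 2 * z₁.im * m.im * s := by
    have h := (UpperHalfPlane.cosh_dist' z₁ m).symm
    rw [hs]
    rw [div_eq_iff (by positivity)] at h
    linarith [h]
  have h2 : (m.re - z₂.re) ^ 2 + m.im ^ 2 + z₂.im ^ 2 = 2 * m.im * z₂.im * s := by
    have h := (UpperHalfPlane.cosh_dist' m z₂).symm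
    rw [hdm, div_eq_iff (by positivity)] at h
    linarith [h]
  have h2' : (z₂.re - m.re) ^ 2 + z₂.im ^ 2 + m.im ^ 2 = 2 * z₂.im * m.im * s := by
    nlinarith [h2]
  have h3 : (z₁.re - z₂.re) ^ 2 + z₁.im ^ 2 + z₂.im ^ 2 = 2 * z₁.im * z₂.im * (2 * s ^ 2 - 1) := by
    have h := (UpperHalfPlane.cosh_dist' z₁ z₂).symm
    rw [hdfull, div_eq_iff (by positivity)] at h
    linarith [h]
  have g := hyp_median_identity z₁.re z₁.im z₂.re z₂.im m.re m.im w.re w.im s h1 h2' h3 hq0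
  have E : Real.cosh (dist w z₁) + Real.cosh (dist w z₂) = 2 * Real.cosh (dist w m) * s := by
    rw [UpperHalfPlane.cosh_dist' w z₁, UpperHalfPlane.cosh_dist' w z₂,
      UpperHalfPlane.cosh_dist' w m]
    have hne1 : (2 * w.im * z₁.im : ℝ) ≠ 0 := by positivity
    have hne2 : (2 * w.im * z₂.im : ℝ) ≠ 0 := by positivity
    have hne3 : (2 * w.im * m.im : ℝ) ≠ 0 := by positivity
    have hr : 2 * (((w.re - m.re) ^ 2 + w.im ^ 2 + m.im ^ 2) / (2 * w.im * m.im)) * s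
        = (2 * s * ((w.re - m.re) ^ 2 + w.im ^ 2 + m.im ^ 2)) / (2 * w.im * m.im) := by
      ring
    rw [hr, div_add_div _ _ hne1 hne2, div_eq_div_iff (by positivity) (by positivity)]
    linear_combination (4 * w.im ^ 2) * g
  have c1 : Real.cosh (dist w z₁) ≤ Real.cosh t := by
    rw [Real.cosh_le_cosh, abs_of_nonneg dist_nonneg, abs_of_pos ht]; exact hw₁
  have c2 : Real.cosh (dist w z₂) ≤ Real.cosh t := by
    rw [Real.cosh_le_cosh, abs_of_nonneg dist_nonneg, abs_of_pos ht]; exact hw₂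
  rw [hds]
  linarith [E, c1, c2]
end

section
/- There exists a universal constant C > 0 such that for all z₁, z₂ ∈ ℍ and all t > 0, the hyperbolic area of the intersection of the two closed balls of radius t centred at z₁ and z₂ satisfies μ(B(z₁,t) ∩ B(z₂,t)) ≤ C · e^{t − d(z₁,z₂)/2}. -/
open MeasureTheory UpperHalfPlane

/-- The Borel measurable structure on the upper half-plane, induced from `ℂ`. -/
noncomputable instance : MeasurableSpace UpperHalfPlane :=
  MeasurableSpace.comap ((↑) : ℍ → ℂ) inferInstance

/-- The hyperbolic area measure on the upper half-plane: the measure with density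
`(Im z)⁻²` with respect to the two-dimensional Lebesgue measure. -/
noncomputable def hypArea : Measure ℍ :=
  (Measure.comap ((↑) : ℍ → ℂ) volume).withDensity
    (fun z => ENNReal.ofReal (1 / z.im ^ 2))

open Set Complex

lemma UHP.range_coe : Set.range ((↑) : ℍ → ℂ) = {z : ℂ | 0 < z.im} := by
  ext w
  constructor
  · rintro ⟨z, rfl⟩; exact z.im_pos
  · intro hw; exact ⟨⟨w, hw⟩, rfl⟩

lemma UHP.measEmb : MeasurableEmbedding ((↑) : ℍ → ℂ) := by
  refine ⟨fun a b h => UpperHalfPlane.ext h, ?_, ?_⟩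
  · exact Measurable.of_comap_le le_rfl
  · intro s hs
    obtain ⟨t, ht, rfl⟩ := hs
    have : ((↑) : ℍ → ℂ) '' ((↑) ⁻¹' t) = t ∩ {z : ℂ | 0 < z.im} := by
      rw [Set.image_preimage_eq_inter_range, UHP.range_coe]
    rw [this]
    exact ht.inter (measurableSet_lt measurable_const Complex.measurable_im)

lemma UHP.lintegral_coe (g : ℂ → ENNReal) (hg : Measurable g) (D : Set ℂ)
    (hD : MeasurableSet D) (hD' : D ⊆ {z : ℂ | 0 < z.im}) :
    ∫⁻ z in ((↑) : ℍ → ℂ) ⁻¹' D, g ↑z ∂(Measure.comap ((↑) : ℍ → ℂ) volume)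
      = ∫⁻ w in D, g w ∂volume := by
  have hpre : MeasurableSet (((↑) : ℍ → ℂ) ⁻¹' D) := UHP.measEmb.measurable hD
  calc ∫⁻ z in ((↑) : ℍ → ℂ) ⁻¹' D, g ↑z ∂(Measure.comap ((↑) : ℍ → ℂ) volume)
      = ∫⁻ z, ((((↑) : ℍ → ℂ) ⁻¹' D).indicator (fun z : ℍ => g ↑z)) z
          ∂(Measure.comap ((↑) : ℍ → ℂ) volume) := (lintegral_indicator hpre _).symm
    _ = ∫⁻ z, (D.indicator g) (↑z) ∂(Measure.comap ((↑) : ℍ → ℂ) volume) :=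
        lintegral_congr fun z => by
          by_cases h : (z : ℂ) ∈ D <;> simp [Set.indicator, h]
    _ = ∫⁻ w, D.indicator g w ∂((Measure.comap ((↑) : ℍ → ℂ) volume).map ((↑) : ℍ → ℂ)) :=
        (UHP.measEmb.lintegral_map _).symm
    _ = ∫⁻ w, D.indicator g w ∂(volume.restrict (Set.range ((↑) : ℍ → ℂ))) := by
        rw [UHP.measEmb.map_comap]
    _ = ∫⁻ w in D, g w ∂(volume.restrict (Set.range ((↑) : ℍ → ℂ))) :=
        lintegral_indicator hD _
    _ = ∫⁻ w in D ∩ Set.range ((↑) : ℍ → ℂ), g w ∂volume := by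
        rw [Measure.restrict_restrict hD]
    _ = ∫⁻ w in D, g w ∂volume := by
        rw [UHP.range_coe, Set.inter_eq_self_of_subset_left hD']

lemma UHP.hypArea_disc_le (a P R : ℝ) (hR : 0 ≤ R) (hPR : R < P) :
    hypArea (((↑) : ℍ → ℂ) ⁻¹' Metric.closedBall (⟨a, P⟩ : ℂ) R) ≤
      ENNReal.ofReal (4 * Real.sqrt (P + R) / Real.sqrt (P - R)) := by
  have hP : 0 < P := lt_of_le_of_lt hR hPR
  have hc : (0:ℝ) < P - R := by linarith
  set D : Set ℂ := Metric.closedBall (⟨a, P⟩ : ℂ) R with hDdef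
  have hD : MeasurableSet D := measurableSet_closedBall
  have hDsub : D ⊆ {z : ℂ | 0 < z.im} := by
    intro w hw
    have h1 : |w.im - P| ≤ R := by
      have := Complex.abs_im_le_norm (w - ⟨a, P⟩)
      rw [Metric.mem_closedBall, Complex.dist_eq] at hw
      simpa using this.trans hw
    have := abs_le.1 h1
    simp only [Set.mem_setOf_eq]
    linarith [this.1]
  have hg : Measurable fun w : ℂ => ENNReal.ofReal (1 / w.im ^ 2) := by
    apply Measurable.ennreal_ofReal; fun_prop
  have hS : MeasurableSet (((↑) : ℍ → ℂ) ⁻¹' D) := UHP.measEmb.measurable hD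
  have step1 : hypArea (((↑) : ℍ → ℂ) ⁻¹' D)
      = ∫⁻ w in D, ENNReal.ofReal (1 / w.im ^ 2) ∂volume := by
    rw [hypArea, withDensity_apply _ hS]
    exact UHP.lintegral_coe _ hg D hD hDsub
  -- transfer to ℝ × ℝ
  set D' : Set (ℝ × ℝ) := {p : ℝ × ℝ | (p.1 - a) ^ 2 + (p.2 - P) ^ 2 ≤ R ^ 2} with hD'def
  have hD' : MeasurableSet D' := by
    apply measurableSet_le (by fun_prop) (by fun_prop)
  have himg : Complex.measurableEquivRealProd '' D = D' := by
    rw [MeasurableEquiv.image_eq_preimage_symm]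
    ext p
    simp only [Set.mem_preimage, hDdef, Metric.mem_closedBall, hD'def, Set.mem_setOf_eq]
    rw [Complex.dist_eq_re_im]
    have : (Complex.measurableEquivRealProd.symm p).re = p.1 ∧
        (Complex.measurableEquivRealProd.symm p).im = p.2 := by
      constructor <;>
        simp [Complex.measurableEquivRealProd, Complex.equivRealProd]
    rw [this.1, this.2]
    exact Real.sqrt_le_left hR
  have step2 : ∫⁻ w in D, ENNReal.ofReal (1 / w.im ^ 2) ∂volume
      = ∫⁻ p in D', ENNReal.ofReal (1 / p.2 ^ 2) ∂volume := by
    rw [← himg]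
    rw [← Complex.volume_preserving_equiv_real_prod.setLIntegral_comp_emb
      Complex.measurableEquivRealProd.measurableEmbedding
      (fun p : ℝ × ℝ => ENNReal.ofReal (1 / p.2 ^ 2)) D]
    exact lintegral_congr fun w => rfl
  have hf : Measurable fun p : ℝ × ℝ => ENNReal.ofReal (1 / p.2 ^ 2) := by
    apply Measurable.ennreal_ofReal; fun_prop
  have step3 : ∫⁻ p in D', ENNReal.ofReal (1 / p.2 ^ 2) ∂volume
      = ∫⁻ y, ∫⁻ x, D'.indicator (fun p => ENNReal.ofReal (1 / p.2 ^ 2)) (x, y) ∂volume ∂volume := by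
    rw [← lintegral_indicator hD', Measure.volume_eq_prod,
      lintegral_prod_symm _ ((hf.indicator hD').aemeasurable)]
  set G : ℝ → ENNReal := (Set.Ioi (P - R)).indicator
     (fun y => ENNReal.ofReal (2 * Real.sqrt (P + R) * y ^ (-(3/2) : ℝ))) with hGdef
  have inner_le : ∀ y : ℝ,
      (∫⁻ x, D'.indicator (fun p => ENNReal.ofReal (1 / p.2 ^ 2)) (x, y) ∂volume) ≤ G y := by
    intro y
    set c : ℝ := R ^ 2 - (y - P) ^ 2 with hcdef
    set h : ℝ := Real.sqrt c with hhdef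
    have hIy : (fun x => D'.indicator (fun p => ENNReal.ofReal (1 / p.2 ^ 2)) (x, y))
        = ({x : ℝ | (x - a) ^ 2 + (y - P) ^ 2 ≤ R ^ 2}).indicator
            (fun _ => ENNReal.ofReal (1 / y ^ 2)) := by
      ext x
      by_cases hx : (x - a) ^ 2 + (y - P) ^ 2 ≤ R ^ 2 <;>
        simp [Set.indicator, hD'def, hx]
    have hIm : MeasurableSet {x : ℝ | (x - a) ^ 2 + (y - P) ^ 2 ≤ R ^ 2} :=
      measurableSet_le (by fun_prop) (by fun_prop)
    have hsub : {x : ℝ | (x - a) ^ 2 + (y - P) ^ 2 ≤ R ^ 2} ⊆ Metric.closedBall a h := by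
      intro x hx
      simp only [Set.mem_setOf_eq] at hx
      rw [Metric.mem_closedBall, Real.dist_eq, ← Real.sqrt_sq_eq_abs]
      exact Real.sqrt_le_sqrt (by rw [hcdef]; nlinarith)
    have main : (∫⁻ x, D'.indicator (fun p => ENNReal.ofReal (1 / p.2 ^ 2)) (x, y) ∂volume)
        ≤ ENNReal.ofReal (1 / y ^ 2 * (2 * h)) := by
      calc (∫⁻ x, D'.indicator (fun p => ENNReal.ofReal (1 / p.2 ^ 2)) (x, y) ∂volume)
          = ∫⁻ x in {x : ℝ | (x - a) ^ 2 + (y - P) ^ 2 ≤ R ^ 2},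
              ENNReal.ofReal (1 / y ^ 2) ∂volume := by rw [hIy]; exact lintegral_indicator hIm _
        _ = ENNReal.ofReal (1 / y ^ 2) * volume {x : ℝ | (x - a) ^ 2 + (y - P) ^ 2 ≤ R ^ 2} :=
            setLIntegral_const _ _
        _ ≤ ENNReal.ofReal (1 / y ^ 2) * ENNReal.ofReal (2 * h) := by
            gcongr
            calc volume {x : ℝ | (x - a) ^ 2 + (y - P) ^ 2 ≤ R ^ 2}
                ≤ volume (Metric.closedBall a h) := measure_mono hsub
              _ = ENNReal.ofReal (2 * h) := Real.volume_closedBall a h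
        _ = ENNReal.ofReal (1 / y ^ 2 * (2 * h)) := (ENNReal.ofReal_mul (by positivity)).symm
    by_cases hy : y ∈ Set.Ioi (P - R)
    · have hy0 : 0 < y := lt_trans hc hy
      have key : h ≤ Real.sqrt y * Real.sqrt (P + R) := by
        by_cases hcpos : 0 ≤ c
        · have h1 : c ≤ y * (P + R) := by
            rw [hcdef]
            have hyb : P - R < y := hy
            nlinarith [sq_nonneg (y - P)]
          calc h ≤ Real.sqrt (y * (P + R)) := Real.sqrt_le_sqrt h1
            _ = Real.sqrt y * Real.sqrt (P + R) := Real.sqrt_mul hy0.le _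
        · push_neg at hcpos
          have : h = 0 := Real.sqrt_eq_zero'.2 hcpos.le
          rw [this]; positivity
      refine main.trans ?_
      rw [hGdef, Set.indicator_of_mem hy]
      apply ENNReal.ofReal_le_ofReal
      have hy32 : y ^ (-(3/2) : ℝ) = Real.sqrt y / y ^ 2 := by
        rw [Real.sqrt_eq_rpow, ← Real.rpow_natCast y 2, ← Real.rpow_sub hy0]
        norm_num
      rw [hy32]
      calc 1 / y ^ 2 * (2 * h) ≤ 1 / y ^ 2 * (2 * (Real.sqrt y * Real.sqrt (P + R))) := by
            gcongr
        _ = 2 * Real.sqrt (P + R) * (Real.sqrt y / y ^ 2) := by ring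
    · have hyle : y ≤ P - R := not_lt.1 hy
      have hcneg : c ≤ 0 := by rw [hcdef]; nlinarith
      have hh0 : h = 0 := Real.sqrt_eq_zero'.2 hcneg
      rw [hGdef, Set.indicator_of_notMem hy]
      refine main.trans ?_
      rw [hh0]
      simp
  have hc2 : (-(3/2) : ℝ) < -1 := by norm_num
  have hint : IntegrableOn (fun y : ℝ => 2 * Real.sqrt (P + R) * y ^ (-(3/2) : ℝ))
      (Set.Ioi (P - R)) volume :=
    (integrableOn_Ioi_rpow_of_lt hc2 hc).const_mul _
  have hnn : 0 ≤ᵐ[volume.restrict (Set.Ioi (P - R))]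
      fun y : ℝ => 2 * Real.sqrt (P + R) * y ^ (-(3/2) : ℝ) := by
    refine (ae_restrict_iff' measurableSet_Ioi).2 (Filter.Eventually.of_forall fun y hy => ?_)
    have hy0 : 0 < y := lt_trans hc hy
    positivity
  have step4 : ∫⁻ y, G y ∂volume
      = ENNReal.ofReal (4 * Real.sqrt (P + R) / Real.sqrt (P - R)) := by
    rw [hGdef, lintegral_indicator measurableSet_Ioi,
      ← ofReal_integral_eq_lintegral_ofReal hint hnn]
    congr 1
    rw [MeasureTheory.integral_const_mul, integral_Ioi_rpow_of_lt hc2 hc]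
    have he : (-(3/2) : ℝ) + 1 = -(1/2) := by norm_num
    rw [he, Real.rpow_neg hc.le]
    rw [show ((1:ℝ)/2) = (1/2 : ℝ) from rfl]
    rw [← Real.sqrt_eq_rpow]
    field_simp
    ring
  calc hypArea (((↑) : ℍ → ℂ) ⁻¹' D)
      = ∫⁻ y, ∫⁻ x, D'.indicator (fun p => ENNReal.ofReal (1 / p.2 ^ 2)) (x, y)
          ∂volume ∂volume := by rw [step1, step2, step3]
    _ ≤ ∫⁻ y, G y ∂volume := lintegral_mono inner_le
    _ = ENNReal.ofReal (4 * Real.sqrt (P + R) / Real.sqrt (P - R)) := step4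

set_option maxHeartbeats 1000000 in
lemma UHP.median_identity (x y x₁ b₁ x₂ b₂ : ℝ) (hy : y ≠ 0) (h1 : b₁ ≠ 0) (h2 : b₂ ≠ 0)
    (h12 : b₁ + b₂ ≠ 0) :
    ((x - x₁) ^ 2 + y ^ 2 + b₁ ^ 2) / (2 * y * b₁)
      + ((x - x₂) ^ 2 + y ^ 2 + b₂ ^ 2) / (2 * y * b₂)
    = ((x - (x₁ * b₂ + x₂ * b₁) / (b₁ + b₂)) ^ 2 + y ^ 2
        + ((((x₁ - x₂) ^ 2 + b₁ ^ 2 + b₂ ^ 2) / (2 * b₁ * b₂) + 1) / 2)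
          * (2 * b₁ * b₂ / (b₁ + b₂)) ^ 2) / (y * (2 * b₁ * b₂ / (b₁ + b₂))) := by
  field_simp
  ring

set_option maxHeartbeats 1000000 in
/-- **Area of an intersection of hyperbolic balls.** There is a universal constant
`C > 0` such that for all `z₁, z₂` in the upper half-plane and all `t > 0`, the hyperbolic
area of the intersection of the closed hyperbolic balls of radius `t` centred at `z₁` and
`z₂` is at most `C * exp (t - d(z₁, z₂) / 2)`. -/
theorem hyperbolic_ball_intersection_area :
    ∃ C : ℝ, 0 < C ∧
      ∀ (z₁ z₂ : ℍ) (t : ℝ), 0 < t →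
        hypArea (Metric.closedBall z₁ t ∩ Metric.closedBall z₂ t) ≤
          ENNReal.ofReal (C * Real.exp (t - dist z₁ z₂ / 2)) := by
  refine ⟨16, by norm_num, fun z₁ z₂ t ht => ?_⟩
  set r := dist z₁ z₂ with hrdef
  have hr0 : (0:ℝ) ≤ r := dist_nonneg
  by_cases hcase : 2 * t < r
  · have hempty : Metric.closedBall z₁ t ∩ Metric.closedBall z₂ t = ∅ := by
      ext w
      simp only [Set.mem_inter_iff, Metric.mem_closedBall, Set.mem_empty_iff_false, iff_false,
        not_and]
      intro h1 h2
      have htri := dist_triangle z₁ w z₂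
      rw [dist_comm z₁ w] at htri
      rw [← hrdef] at htri
      linarith
    rw [hempty]
    simp
  · push_neg at hcase
    set x₁ : ℝ := z₁.re with hx₁
    set x₂ : ℝ := z₂.re with hx₂
    set b₁ : ℝ := z₁.im with hb₁
    set b₂ : ℝ := z₂.im with hb₂
    have hb₁0 : 0 < b₁ := z₁.im_pos
    have hb₂0 : 0 < b₂ := z₂.im_pos
    set K : ℝ := Real.cosh (r / 2) with hKdef
    have hK1 : 1 ≤ K := Real.one_le_cosh _
    have hK0 : 0 < K := lt_of_lt_of_le one_pos hK1
    have hKt : K ≤ Real.cosh t := by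
      apply Real.cosh_le_cosh.2
      rw [_root_.abs_of_nonneg (by linarith : (0:ℝ) ≤ r / 2), _root_.abs_of_pos ht]
      linarith
    set T : ℝ := Real.cosh t / K with hTdef
    have hT1 : 1 ≤ T := (one_le_div hK0).2 hKt
    have hT0 : 0 < T := lt_of_lt_of_le one_pos hT1
    set s : ℝ := Real.sqrt (T ^ 2 - 1) with hsdef
    have hs0 : 0 ≤ s := Real.sqrt_nonneg _
    have hs2 : s ^ 2 = T ^ 2 - 1 := Real.sq_sqrt (by nlinarith [hT1, hT0])
    have hprod : (T - s) * (T + s) = 1 := by linear_combination -hs2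
    have hTps : 0 < T + s := by linarith
    have hTs : 0 < T - s := by
      have hts : T - s = 1 / (T + s) := by
        field_simp
        linear_combination hprod
      rw [hts]; positivity
    have hsT : s ≤ T := by linarith
    set q : ℝ := 2 * b₁ * b₂ / (b₁ + b₂) with hqdef
    have hq0 : 0 < q := by positivity
    set m₁ : ℝ := (x₁ * b₂ + x₂ * b₁) / (b₁ + b₂) with hm₁def
    set P : ℝ := K * q * T with hPdef
    set R : ℝ := K * q * s with hRdef
    have hR0 : 0 ≤ R := by positivity
    have hPR : R < P := by
      have hd : P - R = K * q * (T - s) := by rw [hPdef, hRdef]; ring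
      have : 0 < K * q * (T - s) := by positivity
      linarith
    have hK2 : K ^ 2 = (((x₁ - x₂) ^ 2 + b₁ ^ 2 + b₂ ^ 2) / (2 * b₁ * b₂) + 1) / 2 := by
      have hcr : Real.cosh r = ((x₁ - x₂) ^ 2 + b₁ ^ 2 + b₂ ^ 2) / (2 * b₁ * b₂) :=
        cosh_dist' z₁ z₂
      have h2m := Real.cosh_two_mul (r / 2)
      rw [show 2 * (r / 2) = r by ring] at h2m
      have hss := Real.sinh_sq (r / 2)
      rw [hKdef]
      linarith [hss, h2m, hcr]
    have hsubset : Metric.closedBall z₁ t ∩ Metric.closedBall z₂ t ⊆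
        ((↑) : ℍ → ℂ) ⁻¹' Metric.closedBall (⟨m₁, P⟩ : ℂ) R := by
      rintro w ⟨hw1, hw2⟩
      set x : ℝ := w.re with hxdef
      set y : ℝ := w.im with hydef
      have hy0 : 0 < y := w.im_pos
      have h1 : ((x - x₁) ^ 2 + y ^ 2 + b₁ ^ 2) / (2 * y * b₁) ≤ Real.cosh t := by
        rw [← cosh_dist' w z₁]
        apply Real.cosh_le_cosh.2
        rw [_root_.abs_of_nonneg dist_nonneg, _root_.abs_of_pos ht]
        exact Metric.mem_closedBall.1 hw1
      have h2 : ((x - x₂) ^ 2 + y ^ 2 + b₂ ^ 2) / (2 * y * b₂) ≤ Real.cosh t := by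
        rw [← cosh_dist' w z₂]
        apply Real.cosh_le_cosh.2
        rw [_root_.abs_of_nonneg dist_nonneg, _root_.abs_of_pos ht]
        exact Metric.mem_closedBall.1 hw2
      have hiden : ((x - x₁) ^ 2 + y ^ 2 + b₁ ^ 2) / (2 * y * b₁)
            + ((x - x₂) ^ 2 + y ^ 2 + b₂ ^ 2) / (2 * y * b₂)
          = ((x - m₁) ^ 2 + y ^ 2 + K ^ 2 * q ^ 2) / (y * q) := by
        rw [hK2, hqdef, hm₁def]
        exact UHP.median_identity x y x₁ b₁ x₂ b₂ hy0.ne' hb₁0.ne' hb₂0.ne' (by positivity)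
      have hsum : ((x - m₁) ^ 2 + y ^ 2 + K ^ 2 * q ^ 2) / (y * q) ≤ 2 * Real.cosh t := by
        rw [← hiden]; linarith
      have hyq : 0 < y * q := by positivity
      have hsum2 : (x - m₁) ^ 2 + y ^ 2 + K ^ 2 * q ^ 2 ≤ 2 * y * q * Real.cosh t := by
        rw [div_le_iff₀ hyq] at hsum
        linarith [hsum]
      have hcoshT : Real.cosh t = K * T := by
        rw [hTdef]; field_simp
      have key : (x - m₁) ^ 2 + (y - P) ^ 2 ≤ R ^ 2 := by
        rw [hcoshT] at hsum2
        have hP2 : P ^ 2 = K ^ 2 * q ^ 2 * T ^ 2 := by rw [hPdef]; ring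
        have hR2 : R ^ 2 = K ^ 2 * q ^ 2 * T ^ 2 - K ^ 2 * q ^ 2 := by
          calc R ^ 2 = K ^ 2 * q ^ 2 * s ^ 2 := by rw [hRdef]; ring
            _ = K ^ 2 * q ^ 2 * (T ^ 2 - 1) := by rw [hs2]
            _ = K ^ 2 * q ^ 2 * T ^ 2 - K ^ 2 * q ^ 2 := by ring
        have h2yP : 2 * y * q * (K * T) = 2 * (y * P) := by rw [hPdef]; ring
        linarith [hsum2, hP2, hR2, h2yP]
      rw [Set.mem_preimage, Metric.mem_closedBall, Complex.dist_eq_re_im]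
      exact (Real.sqrt_le_left hR0).2 (by simpa using key)
    calc hypArea (Metric.closedBall z₁ t ∩ Metric.closedBall z₂ t)
        ≤ hypArea (((↑) : ℍ → ℂ) ⁻¹' Metric.closedBall (⟨m₁, P⟩ : ℂ) R) :=
          measure_mono hsubset
      _ ≤ ENNReal.ofReal (4 * Real.sqrt (P + R) / Real.sqrt (P - R)) :=
          UHP.hypArea_disc_le m₁ P R hR0 hPR
      _ ≤ ENNReal.ofReal (16 * Real.exp (t - r / 2)) := by
          apply ENNReal.ofReal_le_ofReal
          have hPplus : 0 ≤ P + R := by positivity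
          have hdiv : Real.sqrt (P + R) / Real.sqrt (P - R)
              = Real.sqrt ((P + R) / (P - R)) := (Real.sqrt_div hPplus _).symm
          have hratio : (P + R) / (P - R) = (T + s) ^ 2 := by
            have h1 : P + R = K * q * (T + s) := by rw [hPdef, hRdef]; ring
            have h2 : P - R = K * q * (T - s) := by rw [hPdef, hRdef]; ring
            calc (P + R) / (P - R) = K * q * (T + s) / (K * q * (T - s)) := by rw [h1, h2]
              _ = (T + s) / (T - s) := mul_div_mul_left _ _ (by positivity)
              _ = (T + s) ^ 2 := by
                  rw [div_eq_iff hTs.ne']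
                  linear_combination (-(T + s)) * hprod
          have hsq : Real.sqrt ((T + s) ^ 2) = T + s := Real.sqrt_sq (by linarith)
          rw [mul_div_assoc, hdiv, hratio, hsq]
          have h6 : Real.cosh t ≤ Real.exp t := by
            rw [Real.cosh_eq]
            have := Real.exp_le_exp.2 (by linarith : -t ≤ t)
            linarith
          have h7 : Real.exp (r / 2) / 2 ≤ K := by
            rw [hKdef, Real.cosh_eq]
            have := Real.exp_pos (-(r / 2))
            linarith
          have h8 : T ≤ 2 * Real.exp (t - r / 2) := by
            rw [hTdef]
            calc Real.cosh t / K ≤ Real.exp t / (Real.exp (r / 2) / 2) := by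
                  apply div_le_div₀ (Real.exp_pos t).le h6 (by positivity) h7
              _ = 2 * Real.exp (t - r / 2) := by
                  rw [Real.exp_sub]; field_simp
          linarith [hsT, h8, Real.exp_pos (t - r / 2)]
end
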